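/- Every monotone function u ∈ L¹_loc(ℝ) is a Class A minimizer of the 1-oscillation functional E_{r,1}: for every interval (a,b) with b − a > 2r and every v ∈ L¹_loc(ℝ) coinciding with u outside (a+r, b−r), one has ∫_a^b osc_{(x−r,x+r)} u dx ≤ ∫_a^b osc_{(x−r,x+r)} v dx. -/

import Mathlib

open MeasureTheory Metric Set Filter
open scoped ENNReal Topology

/-- Convert an extended real to an extended nonnegative real. -/
noncomputable def erealToENNReal (x : EReal) : ℝ≥0∞ :=
  if x = ⊤ then ⊤ else ENNReal.ofReal x.toReal

/-- Essential oscillation of `u : ℝ → ℝ` on a set `s` (possibly `+∞`). -/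
noncomputable def osc1 (u : ℝ → ℝ) (s : Set ℝ) : ℝ≥0∞ :=
  erealToENNReal ((essSup (fun x => (u x : EReal)) (volume.restrict s)) -
    (essInf (fun x => (u x : EReal)) (volume.restrict s)))

lemma erealToENNReal_top : erealToENNReal ⊤ = ⊤ := if_pos rfl

lemma erealToENNReal_coe (x : ℝ) : erealToENNReal (x : EReal) = ENNReal.ofReal x := by
  rw [erealToENNReal, if_neg (EReal.coe_ne_top x), EReal.toReal_coe]

lemma erealToENNReal_mono {x y : EReal} (h : x ≤ y) :
    erealToENNReal x ≤ erealToENNReal y := by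
  by_cases hy : y = ⊤
  · simp [erealToENNReal, hy]
  · have hx : x ≠ ⊤ := fun h' => hy (top_le_iff.1 (h' ▸ h))
    rw [erealToENNReal, erealToENNReal, if_neg hx, if_neg hy]
    by_cases hxb : x = ⊥
    · simp [hxb]
    · exact ENNReal.ofReal_le_ofReal (EReal.toReal_le_toReal h hxb hy)

lemma ereal_sInf_neg (S : Set EReal) : sInf (Neg.neg '' S) = -sSup S := by
  refine eq_of_forall_le_iff fun c => ?_
  rw [le_sInf_iff]
  constructor
  · intro h
    refine EReal.le_neg_of_le_neg ?_
    exact sSup_le fun y hy => EReal.le_neg_of_le_neg (h _ (mem_image_of_mem _ hy))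
  · rintro h z ⟨y, hy, rfl⟩
    exact EReal.le_neg_of_le_neg ((le_sSup hy).trans (EReal.le_neg_of_le_neg h))

lemma ereal_essSup_neg {α : Type*} [MeasurableSpace α] (f : α → EReal) (μ : Measure α) :
    essSup (fun x => -f x) μ = -essInf f μ := by
  rw [essSup_eq_sInf, essInf_eq_sSup, ← ereal_sInf_neg]
  congr 1
  ext a
  simp only [mem_image, mem_setOf_eq]
  constructor
  · intro h
    refine ⟨-a, ?_, neg_neg a⟩
    have : {x | f x < -a} = {x | a < -f x} := by
      ext x; exact EReal.lt_neg_comm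
    rw [this]; exact h
  · rintro ⟨b, hb, rfl⟩
    have : {x | -b < -f x} = {x | f x < b} := by
      ext x; exact EReal.neg_lt_neg_iff
    rw [this]; exact hb

lemma ereal_essInf_neg {α : Type*} [MeasurableSpace α] (f : α → EReal) (μ : Measure α) :
    essInf (fun x => -f x) μ = -essSup f μ := by
  have h := ereal_essSup_neg (fun x => -f x) μ
  simp only [neg_neg] at h
  rw [h, neg_neg]

lemma osc1_neg (w : ℝ → ℝ) (s : Set ℝ) : osc1 (fun y => -w y) s = osc1 w s := by
  unfold osc1
  have hfun : (fun x => ((-w x : ℝ) : EReal)) = fun x => -((w x : EReal)) := by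
    ext x; exact EReal.coe_neg _
  rw [hfun, ereal_essSup_neg, ereal_essInf_neg]
  congr 1
  rw [sub_eq_add_neg, sub_eq_add_neg, neg_neg, add_comm]

lemma osc1_le_of_bounds {w : ℝ → ℝ} {c d lo hi : ℝ}
    (h : ∀ y ∈ Ioo c d, lo ≤ w y ∧ w y ≤ hi) :
    osc1 w (Ioo c d) ≤ ENNReal.ofReal (hi - lo) := by
  have h1 : essSup (fun x => (w x : EReal)) (volume.restrict (Ioo c d)) ≤ (hi : EReal) :=
    essSup_le_of_ae_le _ (ae_restrict_of_forall_mem measurableSet_Ioo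
      (fun y hy => EReal.coe_le_coe_iff.2 (h y hy).2))
  have h2 : (lo : EReal) ≤ essInf (fun x => (w x : EReal)) (volume.restrict (Ioo c d)) :=
    le_essInf_of_ae_le _ (ae_restrict_of_forall_mem measurableSet_Ioo
      (fun y hy => EReal.coe_le_coe_iff.2 (h y hy).1))
  calc osc1 w (Ioo c d) ≤ erealToENNReal ((hi : EReal) - (lo : EReal)) :=
        erealToENNReal_mono (EReal.sub_le_sub h1 h2)
    _ = ENNReal.ofReal (hi - lo) := by rw [← EReal.coe_sub, erealToENNReal_coe]

lemma osc1_ge_avg (w : ℝ → ℝ) (hw : LocallyIntegrable w) {c d s : ℝ}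
    (hs : 0 < s) (hsd : s ≤ d - c) :
    ENNReal.ofReal (((∫ y in (d-s)..d, w y) - (∫ y in c..(c+s), w y)) / s) ≤
      osc1 w (Ioo c d) := by
  have hcd : c < d := by linarith
  set μ' := volume.restrict (Ioo c d) with hμ'
  haveI hne : (ae μ').NeBot := by
    refine ae_neBot.2 fun h0 => ?_
    have hvol : ENNReal.ofReal (d - c) = 0 := by
      rw [← Real.volume_Ioo (a := c) (b := d), ← Measure.restrict_apply_self, ← hμ', h0]
      simp
    rw [ENNReal.ofReal_eq_zero] at hvol
    linarith
  set f : ℝ → EReal := fun y => (w y : EReal) with hf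
  set M := essSup f μ' with hM
  set m := essInf f μ' with hm
  have hosc : osc1 w (Ioo c d) = erealToENNReal (M - m) := rfl
  have hm_ne_top : m ≠ ⊤ := by
    intro hmt
    have hn : ∀ n : ℕ, ∀ᵐ y ∂μ', ((n : ℝ) : EReal) < f y := fun n =>
      ae_lt_of_lt_essInf (by rw [← hm, hmt]; exact EReal.coe_lt_top _)
    obtain ⟨y, hy⟩ := (ae_all_iff.2 hn).exists
    obtain ⟨n, hn'⟩ := exists_nat_gt (w y)
    exact absurd (EReal.coe_lt_coe_iff.1 (hy n)) (not_lt.2 hn'.le)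
  have hM_ne_bot : M ≠ ⊥ := by
    intro hMb
    have hn : ∀ n : ℕ, ∀ᵐ y ∂μ', f y < ((-(n : ℝ)) : EReal) := fun n =>
      ae_lt_of_essSup_lt (by rw [← hM, hMb]; exact EReal.bot_lt_coe _)
    obtain ⟨y, hy⟩ := (ae_all_iff.2 hn).exists
    obtain ⟨n, hn'⟩ := exists_nat_gt (-(w y))
    have := EReal.coe_lt_coe_iff.1 (hy n)
    linarith
  by_cases hm_bot : m = ⊥
  · have hsub : M - m = ⊤ := by rw [hm_bot]; exact EReal.sub_bot hM_ne_bot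
    rw [hosc, hsub, erealToENNReal_top]; exact le_top
  obtain ⟨mr, hmr⟩ : ∃ x : ℝ, m = (x : EReal) := ⟨m.toReal, (EReal.coe_toReal hm_ne_top hm_bot).symm⟩
  by_cases hM_top : M = ⊤
  · have hsub : M - m = ⊤ := by rw [hM_top, hmr]; exact EReal.top_sub_coe mr
    rw [hosc, hsub, erealToENNReal_top]; exact le_top
  obtain ⟨Mr, hMr⟩ : ∃ x : ℝ, M = (x : EReal) := ⟨M.toReal, (EReal.coe_toReal hM_top hM_ne_bot).symm⟩
  have hwM : ∀ᵐ y ∂μ', w y ≤ Mr := by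
    filter_upwards [ae_le_essSup (f := f) (μ := μ')] with y hy
    rw [← hM, hMr] at hy; exact EReal.coe_le_coe_iff.1 hy
  have hwm : ∀ᵐ y ∂μ', mr ≤ w y := by
    filter_upwards [ae_essInf_le (f := f) (μ := μ')] with y hy
    rw [← hm, hmr] at hy; exact EReal.coe_le_coe_iff.1 hy
  have hsub1 : Ioo (d - s) d ⊆ Ioo c d := Ioo_subset_Ioo (by linarith) le_rfl
  have hsub2 : Ioo c (c + s) ⊆ Ioo c d := Ioo_subset_Ioo le_rfl (by linarith)
  have hint1 : IntegrableOn w (Ioo (d - s) d) :=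
    (hw.integrableOn_isCompact isCompact_Icc).mono_set Ioo_subset_Icc_self
  have hint2 : IntegrableOn w (Ioo c (c + s)) :=
    (hw.integrableOn_isCompact isCompact_Icc).mono_set Ioo_subset_Icc_self
  have hub : (∫ y in (d-s)..d, w y) ≤ Mr * s := by
    rw [intervalIntegral.integral_of_le (by linarith), integral_Ioc_eq_integral_Ioo]
    have hbd : ∀ᵐ y ∂(volume.restrict (Ioo (d - s) d)), w y ≤ Mr :=
      ae_restrict_of_ae_restrict_of_subset hsub1 hwM
    calc ∫ y in Ioo (d-s) d, w y ≤ ∫ _y in Ioo (d-s) d, Mr :=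
          integral_mono_ae hint1 (integrableOn_const (by
            rw [Real.volume_Ioo]; exact ENNReal.ofReal_ne_top)) hbd
      _ = Mr * s := by
          rw [setIntegral_const, Real.volume_real_Ioo_of_le (by linarith),
            smul_eq_mul]; ring
  have hlb : mr * s ≤ ∫ y in c..(c+s), w y := by
    rw [intervalIntegral.integral_of_le (by linarith), integral_Ioc_eq_integral_Ioo]
    have hbd : ∀ᵐ y ∂(volume.restrict (Ioo c (c + s))), mr ≤ w y :=
      ae_restrict_of_ae_restrict_of_subset hsub2 hwm
    calc mr * s = ∫ _y in Ioo c (c+s), mr := by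
          rw [setIntegral_const, Real.volume_real_Ioo_of_le (by linarith),
            smul_eq_mul]; ring
      _ ≤ ∫ y in Ioo c (c+s), w y :=
          integral_mono_ae (integrableOn_const (by
            rw [Real.volume_Ioo]; exact ENNReal.ofReal_ne_top)) hint2 hbd
  have hq : ((∫ y in (d-s)..d, w y) - (∫ y in c..(c+s), w y)) / s ≤ Mr - mr := by
    rw [div_le_iff₀ hs]; nlinarith
  calc ENNReal.ofReal (((∫ y in (d-s)..d, w y) - (∫ y in c..(c+s), w y)) / s)
      ≤ ENNReal.ofReal (Mr - mr) := ENNReal.ofReal_le_ofReal hq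
    _ = osc1 w (Ioo c d) := by
        rw [hosc, hMr, hmr, ← EReal.coe_sub, erealToENNReal_coe]

private lemma core (u : ℝ → ℝ) (hu : LocallyIntegrable u) (hmon : Monotone u)
    (r : ℝ) (hr : 0 < r) (a b : ℝ) (hab : b - a > 2 * r) (v : ℝ → ℝ)
    (hv : LocallyIntegrable v) (hvu : ∀ x, x ∉ Ioo (a + r) (b - r) → v x = u x) :
    ∫⁻ x in Ioo a b, osc1 u (Ioo (x - r) (x + r)) ≤
      ∫⁻ x in Ioo a b, osc1 v (Ioo (x - r) (x + r)) := by
  have hab' : a ≤ b := by linarith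
  have hui : ∀ c d : ℝ, IntervalIntegrable u volume c d := fun c d => hmon.intervalIntegrable
  have hvi : ∀ c d : ℝ, IntervalIntegrable v volume c d := fun c d =>
    (hv.integrableOn_isCompact isCompact_uIcc).intervalIntegrable
  set Φ : ℝ → ℝ :=
    fun h => (∫ y in (b-r+h)..(b+r-h), u y) - (∫ y in (a-r+h)..(a+r-h), u y) with hΦdef
  -- Part 1 : the u-side is at most ofReal (Φ 0)
  have hpart1 : ∫⁻ x in Ioo a b, osc1 u (Ioo (x - r) (x + r)) ≤ ENNReal.ofReal (Φ 0) := by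
    set L : ℝ → ℝ := fun t => sSup (u '' Iio t) with hLdef
    set R : ℝ → ℝ := fun t => sInf (u '' Ioi t) with hRdef
    have hbddA : ∀ t : ℝ, BddAbove (u '' Iio t) := fun t => hmon.map_bddAbove bddAbove_Iio
    have hbddB : ∀ t : ℝ, BddBelow (u '' Ioi t) := fun t => hmon.map_bddBelow bddBelow_Ioi
    have hLle : ∀ {y t : ℝ}, y < t → u y ≤ L t := fun {y t} hyt =>
      le_csSup (hbddA t) ⟨y, hyt, rfl⟩
    have hRle : ∀ {y t : ℝ}, t < y → R t ≤ u y := fun {y t} hty =>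
      csInf_le (hbddB t) ⟨y, hty, rfl⟩
    have hLmono : Monotone L := fun x y hxy =>
      csSup_le_csSup (hbddA y) ⟨u (x - 1), x - 1, by simp, rfl⟩
        (image_mono (Iio_subset_Iio hxy))
    have hRmono : Monotone R := fun x y hxy =>
      csInf_le_csInf (hbddB x) ⟨u (y + 1), y + 1, by simp, rfl⟩
        (image_mono (Ioi_subset_Ioi hxy))
    set g : ℝ → ℝ := fun x => L (x + r) - R (x - r) with hgdef
    have hgpoint : ∀ x : ℝ, osc1 u (Ioo (x - r) (x + r)) ≤ ENNReal.ofReal (g x) := fun x =>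
      osc1_le_of_bounds (fun y hy => ⟨hRle hy.1, hLle hy.2⟩)
    have hgnonneg : ∀ x : ℝ, 0 ≤ g x := fun x => by
      have h1 : u x ≤ L (x + r) := hLle (by linarith)
      have h2 : R (x - r) ≤ u x := hRle (by linarith)
      simp only [hgdef]; linarith
    have hLmono' : Monotone fun x : ℝ => L (x + r) := fun x y hxy => hLmono (by linarith)
    have hRmono' : Monotone fun x : ℝ => R (x - r) := fun x y hxy => hRmono (by linarith)
    have hgintL : IntegrableOn (fun x : ℝ => L (x + r)) (Ioo a b) :=
      ((hLmono'.intervalIntegrable (a := a) (b := b)).1).mono_set Ioo_subset_Ioc_self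
    have hgintR : IntegrableOn (fun x : ℝ => R (x - r)) (Ioo a b) :=
      ((hRmono'.intervalIntegrable (a := a) (b := b)).1).mono_set Ioo_subset_Ioc_self
    have hgint : IntegrableOn g (Ioo a b) := hgintL.sub hgintR
    calc ∫⁻ x in Ioo a b, osc1 u (Ioo (x - r) (x + r))
        ≤ ∫⁻ x in Ioo a b, ENNReal.ofReal (g x) := lintegral_mono fun x => hgpoint x
      _ = ENNReal.ofReal (∫ x in Ioo a b, g x) :=
          (ofReal_integral_eq_lintegral_ofReal hgint
            (Eventually.of_forall fun x => hgnonneg x)).symm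
      _ = ENNReal.ofReal (Φ 0) := by
          congr 1
          have hC : Set.Countable {x : ℝ | ¬ContinuousAt u x} := hmon.countable_not_continuousAt
          have hae : ∀ᵐ t : ℝ, L t = u t ∧ R t = u t := by
            filter_upwards [measure_eq_zero_iff_ae_notMem.1 (hC.measure_zero volume)] with t ht
            have hct : ContinuousAt u t := not_not.1 ht
            constructor
            · exact tendsto_nhds_unique (hmon.tendsto_nhdsLT t)
                (hct.tendsto.mono_left nhdsWithin_le_nhds)
            · exact tendsto_nhds_unique (hmon.tendsto_nhdsGT t)
                (hct.tendsto.mono_left nhdsWithin_le_nhds)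
          have e0 : ∫ x in Ioo a b, g x = ∫ x in a..b, g x := by
            rw [intervalIntegral.integral_of_le hab', integral_Ioc_eq_integral_Ioo]
          have e1 : ∫ x in a..b, g x =
              (∫ x in a..b, L (x + r)) - ∫ x in a..b, R (x - r) :=
            intervalIntegral.integral_sub (hLmono'.intervalIntegrable)
              (hRmono'.intervalIntegrable)
          have e2 : (∫ x in a..b, L (x + r)) = ∫ t in (a+r)..(b+r), L t :=
            intervalIntegral.integral_comp_add_right L r
          have e3 : (∫ x in a..b, R (x - r)) = ∫ t in (a-r)..(b-r), R t :=
            intervalIntegral.integral_comp_sub_right R r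
          have e4 : (∫ t in (a+r)..(b+r), L t) = ∫ t in (a+r)..(b+r), u t :=
            intervalIntegral.integral_congr_ae
              (by filter_upwards [hae] with t ht _; exact ht.1)
          have e5 : (∫ t in (a-r)..(b-r), R t) = ∫ t in (a-r)..(b-r), u t :=
            intervalIntegral.integral_congr_ae
              (by filter_upwards [hae] with t ht _; exact ht.2)
          have s1 : (∫ y in (a+r)..(b-r), u y) + (∫ y in (b-r)..(b+r), u y)
              = ∫ y in (a+r)..(b+r), u y :=
            intervalIntegral.integral_add_adjacent_intervals (hui _ _) (hui _ _)
          have s2 : (∫ y in (a-r)..(a+r), u y) + (∫ y in (a+r)..(b-r), u y)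
              = ∫ y in (a-r)..(b-r), u y :=
            intervalIntegral.integral_add_adjacent_intervals (hui _ _) (hui _ _)
          have hΦ0 : Φ 0 = (∫ y in (b-r)..(b+r), u y) - ∫ y in (a-r)..(a+r), u y := by
            simp only [hΦdef, add_zero, sub_zero]
          rw [e0, e1, e2, e3, e4, e5, hΦ0]
          linarith
  -- primitive of v and of u
  set V : ℝ → ℝ := fun t => ∫ y in (0:ℝ)..t, v y with hVdef
  have hVcont : Continuous V := intervalIntegral.continuous_primitive hvi 0
  have hVival : ∀ c d : ℝ, (∫ y in c..d, v y) = V d - V c := fun c d =>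
    (intervalIntegral.integral_interval_sub_left (hvi 0 d) (hvi 0 c)).symm
  set U : ℝ → ℝ := fun t => ∫ y in (0:ℝ)..t, u y with hUdef
  have hUcont : Continuous U := intervalIntegral.continuous_primitive hui 0
  have hUival : ∀ c d : ℝ, (∫ y in c..d, u y) = U d - U c := fun c d =>
    (intervalIntegral.integral_interval_sub_left (hui 0 d) (hui 0 c)).symm
  -- Part 2 : lower bound for the v-side, for every small s
  have hpart2 : ∀ s : ℝ, 0 < s → s ≤ r →
      ENNReal.ofReal ((∫ h in (0:ℝ)..s, Φ h) / s) ≤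
        ∫⁻ x in Ioo a b, osc1 v (Ioo (x - r) (x + r)) := by
    intro s hs0 hsr
    set q : ℝ → ℝ :=
      fun x => ((∫ y in (x+r-s)..(x+r), v y) - (∫ y in (x-r)..(x-r+s), v y)) / s with hqdef
    have hqpoint : ∀ x : ℝ, ENNReal.ofReal (q x) ≤ osc1 v (Ioo (x - r) (x + r)) := fun x =>
      osc1_ge_avg v hv hs0 (by linarith)
    have hq_eq : q = fun x => ((V (x+r) - V (x+r-s)) - (V (x-r+s) - V (x-r))) / s := by
      funext x; simp only [hqdef, hVival]
    have cva1 : Continuous (fun x : ℝ => V (x + r)) :=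
      hVcont.comp (continuous_add_right r)
    have cva2 : Continuous (fun x : ℝ => V (x + r - s)) :=
      hVcont.comp ((continuous_add_right r).sub continuous_const)
    have cva3 : Continuous (fun x : ℝ => V (x - r + s)) :=
      hVcont.comp ((continuous_sub_right r).add continuous_const)
    have cva4 : Continuous (fun x : ℝ => V (x - r)) :=
      hVcont.comp (continuous_sub_right r)
    have iva1 : IntervalIntegrable (fun x : ℝ => V (x + r)) volume a b :=
      cva1.intervalIntegrable a b
    have iva2 : IntervalIntegrable (fun x : ℝ => V (x + r - s)) volume a b :=
      cva2.intervalIntegrable a b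
    have iva3 : IntervalIntegrable (fun x : ℝ => V (x - r + s)) volume a b :=
      cva3.intervalIntegrable a b
    have iva4 : IntervalIntegrable (fun x : ℝ => V (x - r)) volume a b :=
      cva4.intervalIntegrable a b
    have hqcont : Continuous q := by
      rw [hq_eq]
      exact ((cva1.sub cva2).sub (cva3.sub cva4)).div_const s
    have hqint : IntegrableOn q (Ioo a b) :=
      (hqcont.integrableOn_Icc).mono_set Ioo_subset_Icc_self
    set qp : ℝ → ℝ := fun x => max (q x) 0 with hqpdef
    have hqpint : IntegrableOn qp (Ioo a b) := hqint.pos_part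
    -- the integral identity
    have hcomp : ∫ x in Ioo a b, q x = (∫ h in (0:ℝ)..s, Φ h) / s := by
      have e0 : ∫ x in Ioo a b, q x = ∫ x in a..b, q x := by
        rw [intervalIntegral.integral_of_le hab', integral_Ioc_eq_integral_Ioo]
      -- x-side
      have ea1 : (∫ x in a..b, V (x + r)) = ∫ t in (a+r)..(b+r), V t :=
        intervalIntegral.integral_comp_add_right V r
      have ea2 : (∫ x in a..b, V (x + r - s)) = ∫ t in (a+r-s)..(b+r-s), V t := by
        have : (fun x : ℝ => V (x + r - s)) = fun x : ℝ => V (x + (r - s)) := by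
          funext x; congr 1; ring
        rw [show (∫ x in a..b, V (x + r - s)) = ∫ x in a..b, V (x + (r - s)) by
            rw [this]]
        rw [intervalIntegral.integral_comp_add_right V (r - s)]
        congr 1 <;> ring
      have ea3 : (∫ x in a..b, V (x - r + s)) = ∫ t in (a-r+s)..(b-r+s), V t := by
        have : (fun x : ℝ => V (x - r + s)) = fun x : ℝ => V (x + (s - r)) := by
          funext x; congr 1; ring
        rw [show (∫ x in a..b, V (x - r + s)) = ∫ x in a..b, V (x + (s - r)) by
            rw [this]]
        rw [intervalIntegral.integral_comp_add_right V (s - r)]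
        congr 1 <;> ring
      have ea4 : (∫ x in a..b, V (x - r)) = ∫ t in (a-r)..(b-r), V t :=
        intervalIntegral.integral_comp_sub_right V r
      have hxint : ∫ x in a..b, q x =
          ((∫ t in (a+r)..(b+r), V t) - (∫ t in (a+r-s)..(b+r-s), V t)
            - ((∫ t in (a-r+s)..(b-r+s), V t) - ∫ t in (a-r)..(b-r), V t)) / s := by
        rw [hq_eq, intervalIntegral.integral_div]
        congr 1
        rw [intervalIntegral.integral_sub (iva1.sub iva2) (iva3.sub iva4),
          intervalIntegral.integral_sub iva1 iva2, intervalIntegral.integral_sub iva3 iva4,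
          ea1, ea2, ea3, ea4]
      -- h-side
      have hΦΨ : ∫ h in (0:ℝ)..s, Φ h =
          ∫ h in (0:ℝ)..s, ((V (b+r-h) - V (b-r+h)) - (V (a+r-h) - V (a-r+h))) := by
        refine intervalIntegral.integral_congr fun h hh => ?_
        rw [uIcc_of_le hs0.le] at hh
        obtain ⟨hh0, hhs⟩ := hh
        have hb1 : (∫ y in (b-r+h)..(b+r-h), u y) = ∫ y in (b-r+h)..(b+r-h), v y := by
          refine intervalIntegral.integral_congr fun y hy => ?_
          rw [uIcc_of_le (by linarith)] at hy
          exact (hvu y (fun hmem => absurd hmem.2 (by push_neg; linarith [hy.1]))).symm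
        have hb2 : (∫ y in (a-r+h)..(a+r-h), u y) = ∫ y in (a-r+h)..(a+r-h), v y := by
          refine intervalIntegral.integral_congr fun y hy => ?_
          rw [uIcc_of_le (by linarith)] at hy
          exact (hvu y (fun hmem => absurd hmem.1 (by push_neg; linarith [hy.2]))).symm
        simp only [hΦdef]
        rw [hb1, hb2, hVival, hVival]
      have eb1 : (∫ h in (0:ℝ)..s, V (b+r-h)) = ∫ t in (b+r-s)..(b+r), V t := by
        rw [intervalIntegral.integral_comp_sub_left V (b+r)]
        congr 1; ring
      have eb2 : (∫ h in (0:ℝ)..s, V (b-r+h)) = ∫ t in (b-r)..(b-r+s), V t := by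
        have : (fun h : ℝ => V (b - r + h)) = fun h : ℝ => V (h + (b - r)) := by
          funext h; congr 1; ring
        rw [show (∫ h in (0:ℝ)..s, V (b-r+h)) = ∫ h in (0:ℝ)..s, V (h + (b - r)) by rw [this]]
        rw [intervalIntegral.integral_comp_add_right V (b - r)]
        congr 1 <;> ring
      have eb3 : (∫ h in (0:ℝ)..s, V (a+r-h)) = ∫ t in (a+r-s)..(a+r), V t := by
        rw [intervalIntegral.integral_comp_sub_left V (a+r)]
        congr 1; ring
      have eb4 : (∫ h in (0:ℝ)..s, V (a-r+h)) = ∫ t in (a-r)..(a-r+s), V t := by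
        have : (fun h : ℝ => V (a - r + h)) = fun h : ℝ => V (h + (a - r)) := by
          funext h; congr 1; ring
        rw [show (∫ h in (0:ℝ)..s, V (a-r+h)) = ∫ h in (0:ℝ)..s, V (h + (a - r)) by rw [this]]
        rw [intervalIntegral.integral_comp_add_right V (a - r)]
        congr 1 <;> ring
      have cvb1 : Continuous (fun h : ℝ => V (b + r - h)) :=
        hVcont.comp (continuous_const.sub continuous_id)
      have cvb2 : Continuous (fun h : ℝ => V (b - r + h)) :=
        hVcont.comp (continuous_const.add continuous_id)
      have cvb3 : Continuous (fun h : ℝ => V (a + r - h)) :=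
        hVcont.comp (continuous_const.sub continuous_id)
      have cvb4 : Continuous (fun h : ℝ => V (a - r + h)) :=
        hVcont.comp (continuous_const.add continuous_id)
      have ivb1 : IntervalIntegrable (fun h : ℝ => V (b + r - h)) volume 0 s :=
        cvb1.intervalIntegrable 0 s
      have ivb2 : IntervalIntegrable (fun h : ℝ => V (b - r + h)) volume 0 s :=
        cvb2.intervalIntegrable 0 s
      have ivb3 : IntervalIntegrable (fun h : ℝ => V (a + r - h)) volume 0 s :=
        cvb3.intervalIntegrable 0 s
      have ivb4 : IntervalIntegrable (fun h : ℝ => V (a - r + h)) volume 0 s :=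
        cvb4.intervalIntegrable 0 s
      have hhint : ∫ h in (0:ℝ)..s, Φ h =
          (∫ t in (b+r-s)..(b+r), V t) - (∫ t in (b-r)..(b-r+s), V t)
            - ((∫ t in (a+r-s)..(a+r), V t) - ∫ t in (a-r)..(a-r+s), V t) := by
        rw [hΦΨ]
        rw [intervalIntegral.integral_sub (ivb1.sub ivb2) (ivb3.sub ivb4),
          intervalIntegral.integral_sub ivb1 ivb2, intervalIntegral.integral_sub ivb3 ivb4,
          eb1, eb2, eb3, eb4]
      -- adjacent interval identities
      have hVii : ∀ c d : ℝ, IntervalIntegrable V volume c d := fun c d =>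
        hVcont.intervalIntegrable c d
      have t1 : (∫ t in (a+r-s)..(a+r), V t) + (∫ t in (a+r)..(b+r), V t)
          = ∫ t in (a+r-s)..(b+r), V t :=
        intervalIntegral.integral_add_adjacent_intervals (hVii _ _) (hVii _ _)
      have t2 : (∫ t in (a+r-s)..(b+r-s), V t) + (∫ t in (b+r-s)..(b+r), V t)
          = ∫ t in (a+r-s)..(b+r), V t :=
        intervalIntegral.integral_add_adjacent_intervals (hVii _ _) (hVii _ _)
      have t3 : (∫ t in (a-r)..(a-r+s), V t) + (∫ t in (a-r+s)..(b-r+s), V t)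
          = ∫ t in (a-r)..(b-r+s), V t :=
        intervalIntegral.integral_add_adjacent_intervals (hVii _ _) (hVii _ _)
      have t4 : (∫ t in (a-r)..(b-r), V t) + (∫ t in (b-r)..(b-r+s), V t)
          = ∫ t in (a-r)..(b-r+s), V t :=
        intervalIntegral.integral_add_adjacent_intervals (hVii _ _) (hVii _ _)
      rw [e0, hxint, hhint]
      field_simp
      linarith
    calc ENNReal.ofReal ((∫ h in (0:ℝ)..s, Φ h) / s)
        = ENNReal.ofReal (∫ x in Ioo a b, q x) := by rw [hcomp]
      _ ≤ ENNReal.ofReal (∫ x in Ioo a b, qp x) := ENNReal.ofReal_le_ofReal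
          (integral_mono hqint hqpint (fun x => le_max_left _ _))
      _ = ∫⁻ x in Ioo a b, ENNReal.ofReal (qp x) := ofReal_integral_eq_lintegral_ofReal hqpint
          (Eventually.of_forall fun x => le_max_right _ _)
      _ ≤ ∫⁻ x in Ioo a b, osc1 v (Ioo (x - r) (x + r)) := by
          refine lintegral_mono fun x => ?_
          have : ENNReal.ofReal (qp x) = ENNReal.ofReal (q x) := by
            rcases le_total 0 (q x) with h | h
            · show ENNReal.ofReal (max (q x) 0) = _
              rw [max_eq_left h]
            · show ENNReal.ofReal (max (q x) 0) = _
              rw [max_eq_right h, ENNReal.ofReal_zero, eq_comm, ENNReal.ofReal_eq_zero]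
              exact h
          rw [this]; exact hqpoint x
  -- Part 3 : take the limit s → 0⁺
  have hΦcont : Continuous Φ := by
    have heq : Φ = fun h => (U (b+r-h) - U (b-r+h)) - (U (a+r-h) - U (a-r+h)) := by
      funext h; simp only [hΦdef]; rw [hUival, hUival]
    have cub1 : Continuous (fun h : ℝ => U (b + r - h)) :=
      hUcont.comp (continuous_const.sub continuous_id)
    have cub2 : Continuous (fun h : ℝ => U (b - r + h)) :=
      hUcont.comp (continuous_const.add continuous_id)
    have cub3 : Continuous (fun h : ℝ => U (a + r - h)) :=
      hUcont.comp (continuous_const.sub continuous_id)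
    have cub4 : Continuous (fun h : ℝ => U (a - r + h)) :=
      hUcont.comp (continuous_const.add continuous_id)
    rw [heq]
    exact (cub1.sub cub2).sub (cub3.sub cub4)
  have hFderiv : HasDerivAt (fun t => ∫ h in (0:ℝ)..t, Φ h) (Φ 0) 0 :=
    intervalIntegral.integral_hasDerivAt_right (hΦcont.intervalIntegrable 0 0)
      (hΦcont.stronglyMeasurableAtFilter _ _) hΦcont.continuousAt
  have hslope : Tendsto (fun t : ℝ => (∫ h in (0:ℝ)..t, Φ h) / t) (𝓝[>] (0:ℝ))
      (𝓝 (Φ 0)) := by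
    have h1 := hasDerivAt_iff_tendsto_slope.1 hFderiv
    have h2 : (slope (fun t => ∫ h in (0:ℝ)..t, Φ h) 0) =
        fun t : ℝ => (∫ h in (0:ℝ)..t, Φ h) / t := by
      funext t
      rw [slope_def_field]
      simp [intervalIntegral.integral_same]
    rw [h2] at h1
    exact h1.mono_left (nhdsWithin_mono 0 (fun x hx => ne_of_gt hx))
  have htend : Tendsto (fun t : ℝ => ENNReal.ofReal ((∫ h in (0:ℝ)..t, Φ h) / t))
      (𝓝[>] (0:ℝ)) (𝓝 (ENNReal.ofReal (Φ 0))) :=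
    (ENNReal.continuous_ofReal.continuousAt.tendsto).comp hslope
  refine hpart1.trans (le_of_tendsto htend ?_)
  filter_upwards [Ioc_mem_nhdsGT hr] with t ht
  exact hpart2 t ht.1 ht.2

/-- every monotone function is a Class A minimizer for `E_{r,1}`. -/
theorem monotone_classA_p1 (u : ℝ → ℝ) (hu : LocallyIntegrable u)
    (hmon : Monotone u ∨ Antitone u) (r : ℝ) (hr : 0 < r) :
    ∀ a b : ℝ, b - a > 2 * r → ∀ v : ℝ → ℝ, LocallyIntegrable v →
      (∀ x, x ∉ Ioo (a + r) (b - r) → v x = u x) →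
      ∫⁻ x in Ioo a b, osc1 u (Ioo (x - r) (x + r)) ≤
        ∫⁻ x in Ioo a b, osc1 v (Ioo (x - r) (x + r)) := by
  intro a b hab v hv hvu
  rcases hmon with hm | hm
  · exact core u hu hm r hr a b hab v hv hvu
  · have hm' : Monotone fun y => -u y := fun x y hxy => neg_le_neg (hm hxy)
    have h := core (fun y => -u y) hu.neg hm' r hr a b hab (fun y => -v y) hv.neg
      (fun x hx => by show -v x = -u x; rw [hvu x hx])
    simpa only [osc1_neg] using h
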